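/- Let k ≥ 1 be a natural number, let z₀ ∈ ℂ be nonzero, and let γ₁, γ₂ : [0,1] → ℂ be continuous loops based at z₀ that never take the value 0. Let Γ : [0,1] → ℂ be the concatenated commutator loop γ₁ · γ₂ · γ₁⁻¹ · γ₂⁻¹ (traverse γ₁ on [0,1/4], then γ₂ on [1/4,1/2], then γ₁ reversed on [1/2,3/4], then γ₂ reversed on [3/4,1]). If ζ : [0,1] → ℂ is continuous with ζ(t)^k = Γ(t) for all t, then ζ(1) = ζ(0): along a commutator of loops, every continuously-varying k-th root returns to its starting value. -/

import Mathlib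

/-- The commutator loop `γ₁ · γ₂ · γ₁⁻¹ · γ₂⁻¹` of two loops `γ₁, γ₂` on `[0,1]`:
traverse `γ₁` on `[0,1/4]`, then `γ₂` on `[1/4,1/2]`, then `γ₁` reversed on `[1/2,3/4]`,
then `γ₂` reversed on `[3/4,1]`. -/
noncomputable def commutatorLoop (γ₁ γ₂ : ℝ → ℂ) (t : ℝ) : ℂ :=
  if t ≤ 1 / 4 then γ₁ (4 * t)
  else if t ≤ 1 / 2 then γ₂ (4 * t - 1)
  else if t ≤ 3 / 4 then γ₁ (1 - (4 * t - 2))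
  else γ₂ (1 - (4 * t - 3))


/-- Glue two continuous functions at a point. -/
lemma glueIfLe {f g : ℝ → ℂ} {s : Set ℝ} {b : ℝ}
    (hf : ContinuousOn f (s ∩ Set.Iic b)) (hg : ContinuousOn g (s ∩ Set.Ici b))
    (hfg : b ∈ s → f b = g b) :
    ContinuousOn (fun t => if t ≤ b then f t else g t) s := by
  apply ContinuousOn.if
  · intro a ha
    have hfr : a ∈ frontier (Set.Iic b) := by
      simpa [Set.Iic] using ha.2
    rw [frontier_Iic] at hfr
    rw [Set.mem_singleton_iff] at hfr
    subst hfr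
    exact hfg ha.1
  · have : closure {a : ℝ | a ≤ b} = Set.Iic b := by
      rw [show {a : ℝ | a ≤ b} = Set.Iic b from rfl, closure_Iic]
    rwa [this]
  · have : closure {a : ℝ | ¬ a ≤ b} = Set.Ici b := by
      rw [show {a : ℝ | ¬ a ≤ b} = Set.Ioi b by ext x; simp [not_le], closure_Ioi]
    rwa [this]

/-- A continuous nonvanishing function on `[0,1]` has a continuous logarithm. -/
lemma exists_continuous_log (g : ℝ → ℂ) (hg : ContinuousOn g (Set.Icc 0 1))
    (hne : ∀ t ∈ Set.Icc (0:ℝ) 1, g t ≠ 0) :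
    ∃ L : ℝ → ℂ, ContinuousOn L (Set.Icc 0 1) ∧
      ∀ t ∈ Set.Icc (0:ℝ) 1, Complex.exp (L t) = g t := by
  obtain ⟨t₀, ht₀, hmin⟩ := isCompact_Icc.exists_isMinOn (Set.nonempty_Icc.2 zero_le_one) hg.norm
  set ε := ‖g t₀‖ with hεdef
  have hεpos : 0 < ε := norm_pos_iff.2 (hne t₀ ht₀)
  have hεle : ∀ t ∈ Set.Icc (0:ℝ) 1, ε ≤ ‖g t‖ := fun t ht => hmin ht
  have huc := isCompact_Icc.uniformContinuousOn_of_continuous hg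
  obtain ⟨δ, hδpos, hδ⟩ := Metric.uniformContinuousOn_iff.mp huc ε hεpos
  obtain ⟨n, hn⟩ := exists_nat_one_div_lt hδpos
  set m : ℕ := n + 1 with hm
  have hmpos : (0:ℝ) < m := by positivity
  have hmδ : 1 / (m:ℝ) < δ := by exact_mod_cast hn
  have key : ∀ i : ℕ, i ≤ m → ∃ L : ℝ → ℂ, ContinuousOn L (Set.Icc 0 ((i:ℝ)/m)) ∧
      ∀ t ∈ Set.Icc (0:ℝ) ((i:ℝ)/m), Complex.exp (L t) = g t := by
    intro i
    induction i with
    | zero =>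
      intro _
      refine ⟨fun _ => Complex.log (g 0), continuousOn_const, ?_⟩
      intro t ht
      simp only [Nat.cast_zero, zero_div] at ht
      have : t = 0 := le_antisymm ht.2 ht.1
      subst this
      exact Complex.exp_log (hne 0 ⟨le_refl 0, zero_le_one⟩)
    | succ i ih =>
      intro hi
      obtain ⟨L, hL, hLg⟩ := ih (Nat.le_of_succ_le hi)
      simp only [Nat.cast_add, Nat.cast_one]
      set a : ℝ := (i:ℝ)/m with ha
      set b : ℝ := ((i:ℝ)+1)/m with hb
      have ha0 : 0 ≤ a := by positivity
      have hab : a ≤ b := by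
        rw [ha, hb]
        gcongr
        linarith
      have hb1 : b ≤ 1 := by
        rw [hb, div_le_one hmpos]
        have : ((i:ℝ)+1) ≤ (m:ℝ) := by exact_mod_cast hi
        linarith
      have ha1 : a ≤ 1 := hab.trans hb1
      have haI : a ∈ Set.Icc (0:ℝ) 1 := ⟨ha0, ha1⟩
      have hga : g a ≠ 0 := hne a haI
      have hsub : Set.Icc a b ⊆ Set.Icc (0:ℝ) 1 := Set.Icc_subset_Icc ha0 hb1
      -- ratio close to 1 on [a,b]
      have hslit : ∀ t ∈ Set.Icc a b, g t / g a ∈ Complex.slitPlane := by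
        intro t ht
        have htI : t ∈ Set.Icc (0:ℝ) 1 := hsub ht
        have hdist : dist t a < δ := by
          rw [Real.dist_eq]
          rw [_root_.abs_of_nonneg (show (0:ℝ) ≤ t - a by linarith [ht.1])]
          have : t - a ≤ b - a := by linarith [ht.2]
          have hba : b - a = 1 / m := by rw [ha, hb]; ring
          linarith
        have hgd : dist (g t) (g a) < ε := hδ t htI a haI hdist
        have hnorm : ‖g t / g a - 1‖ < 1 := by
          rw [div_sub_one hga, norm_div]
          rw [div_lt_one (norm_pos_iff.2 hga)]
          calc ‖g t - g a‖ < ε := by rwa [dist_eq_norm] at hgd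
            _ ≤ ‖g a‖ := hεle a haI
        apply Complex.mem_slitPlane_iff.2
        left
        have h1 : |(g t / g a).re - 1| ≤ ‖g t / g a - 1‖ := by
          have := Complex.abs_re_le_norm (g t / g a - 1)
          simpa [Complex.sub_re, Complex.one_re] using this
        have : |(g t / g a).re - 1| < 1 := lt_of_le_of_lt h1 hnorm
        have := abs_lt.mp this
        linarith [this.1]
      refine ⟨fun t => if t ≤ a then L t else L a + Complex.log (g t / g a), ?_, ?_⟩
      · apply glueIfLe
        · have : Set.Icc 0 b ∩ Set.Iic a = Set.Icc 0 a := by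
            ext x
            simp only [Set.mem_inter_iff, Set.mem_Icc, Set.mem_Iic]
            exact ⟨fun h => ⟨h.1.1, h.2⟩, fun h => ⟨⟨h.1, h.2.trans hab⟩, h.2⟩⟩
          rwa [this]
        · have : Set.Icc 0 b ∩ Set.Ici a = Set.Icc a b := by
            ext x
            simp only [Set.mem_inter_iff, Set.mem_Icc, Set.mem_Ici]
            exact ⟨fun h => ⟨h.2, h.1.2⟩, fun h => ⟨⟨ha0.trans h.1, h.2⟩, h.1⟩⟩
          rw [this]
          apply ContinuousOn.add continuousOn_const
          exact ContinuousOn.clog ((hg.mono hsub).div continuousOn_const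
            (fun t ht => hga)) hslit
        · intro _
          rw [div_self hga, Complex.log_one, add_zero]
      · intro t ht
        by_cases hta : t ≤ a
        · simp only [if_pos hta]
          exact hLg t ⟨ht.1, hta⟩
        · simp only [if_neg hta]
          push_neg at hta
          have htab : t ∈ Set.Icc a b := ⟨hta.le, ht.2⟩
          have hgt : g t ≠ 0 := hne t (hsub htab)
          rw [Complex.exp_add, Complex.exp_log (div_ne_zero hgt hga),
            hLg a ⟨ha0, le_refl a⟩, mul_div_cancel₀ _ hga]
  obtain ⟨L, h1, h2⟩ := key m le_rfl
  have : ((m:ℝ))/m = 1 := div_self (ne_of_gt hmpos)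
  rw [this] at h1 h2
  exact ⟨L, h1, h2⟩

/-- Along a commutator of loops based at `z₀ ≠ 0` and avoiding `0`, every
continuously-varying `k`-th root returns to its starting value: `ζ 1 = ζ 0`. -/
theorem kth_root_loop_along_commutator (k : ℕ) (hk : 1 ≤ k) (z₀ : ℂ) (hz₀ : z₀ ≠ 0)
    (γ₁ γ₂ : ℝ → ℂ)
    (hγ₁ : ContinuousOn γ₁ (Set.Icc 0 1)) (hγ₂ : ContinuousOn γ₂ (Set.Icc 0 1))
    (h₁₀ : γ₁ 0 = z₀) (h₁₁ : γ₁ 1 = z₀) (h₂₀ : γ₂ 0 = z₀) (h₂₁ : γ₂ 1 = z₀)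
    (hne₁ : ∀ t ∈ Set.Icc (0 : ℝ) 1, γ₁ t ≠ 0) (hne₂ : ∀ t ∈ Set.Icc (0 : ℝ) 1, γ₂ t ≠ 0)
    (ζ : ℝ → ℂ) (hζ : ContinuousOn ζ (Set.Icc 0 1))
    (hroot : ∀ t ∈ Set.Icc (0 : ℝ) 1, ζ t ^ k = commutatorLoop γ₁ γ₂ t) :
    ζ 1 = ζ 0 := by
  obtain ⟨l₁, hl₁c, hl₁⟩ := exists_continuous_log γ₁ hγ₁ hne₁
  obtain ⟨l₂, hl₂c, hl₂⟩ := exists_continuous_log γ₂ hγ₂ hne₂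
  have h0I : (0:ℝ) ∈ Set.Icc (0:ℝ) 1 := ⟨le_refl 0, zero_le_one⟩
  have h1I : (1:ℝ) ∈ Set.Icc (0:ℝ) 1 := ⟨zero_le_one, le_refl 1⟩
  -- the continuous logarithm of the commutator loop
  set L : ℝ → ℂ := fun t =>
    if t ≤ 1 / 4 then l₁ (4 * t)
    else if t ≤ 1 / 2 then l₂ (4 * t - 1) + (l₁ 1 - l₂ 0)
    else if t ≤ 3 / 4 then l₁ (1 - (4 * t - 2)) + (l₂ 1 - l₂ 0)
    else l₂ (1 - (4 * t - 3)) + (l₁ 0 - l₂ 0) with hLdef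
  -- continuity of the affine reparametrizations
  have haff : ∀ (c d : ℝ), Continuous (fun t : ℝ => c * t + d) := fun c d =>
    (continuous_const.mul continuous_id).add continuous_const
  have hLc : ContinuousOn L (Set.Icc 0 1) := by
    rw [hLdef]
    apply glueIfLe (b := (1:ℝ)/4)
    · -- γ₁ part on [0, 1/4]
      apply ContinuousOn.mono (s := Set.Icc 0 (1/4 : ℝ))
      · apply hl₁c.comp ((haff 4 0).continuousOn.congr (by intro x _; simp))
        intro x hx
        simp only [Set.mem_Icc] at hx ⊢
        constructor <;> linarith [hx.1, hx.2]
      · intro x hx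
        exact ⟨hx.1.1, hx.2⟩
    · apply ContinuousOn.mono (s := Set.Icc (1/4 : ℝ) 1)
      swap
      · intro x hx; exact ⟨hx.2, hx.1.2⟩
      apply glueIfLe (b := (1:ℝ)/2)
      · apply ContinuousOn.mono (s := Set.Icc (1/4 : ℝ) (1/2 : ℝ))
        · apply ContinuousOn.add ?_ continuousOn_const
          apply hl₂c.comp ((haff 4 (-1)).continuousOn.congr (by intro x _; simp; ring))
          intro x hx
          simp only [Set.mem_Icc] at hx ⊢
          constructor <;> linarith [hx.1, hx.2]
        · intro x hx; exact ⟨hx.1.1, hx.2⟩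
      · apply ContinuousOn.mono (s := Set.Icc (1/2 : ℝ) 1)
        swap
        · intro x hx; exact ⟨hx.2, hx.1.2⟩
        apply glueIfLe (b := (3:ℝ)/4)
        · apply ContinuousOn.mono (s := Set.Icc (1/2 : ℝ) (3/4 : ℝ))
          · apply ContinuousOn.add ?_ continuousOn_const
            apply hl₁c.comp ((haff (-4) 3).continuousOn.congr (by intro x _; simp; ring))
            intro x hx
            simp only [Set.mem_Icc] at hx ⊢
            constructor <;> linarith [hx.1, hx.2]
          · intro x hx; exact ⟨hx.1.1, hx.2⟩
        · apply ContinuousOn.mono (s := Set.Icc (3/4 : ℝ) 1)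
          · apply ContinuousOn.add ?_ continuousOn_const
            apply hl₂c.comp ((haff (-4) 4).continuousOn.congr (by intro x _; simp; ring))
            intro x hx
            simp only [Set.mem_Icc] at hx ⊢
            constructor <;> linarith [hx.1, hx.2]
          · intro x hx; exact ⟨hx.2, hx.1.2⟩
        · intro _
          norm_num
          try ring
      · intro _
        norm_num
        try ring
    · intro _
      norm_num
      try ring
  -- exp ∘ L = commutator loop
  have hLexp : ∀ t ∈ Set.Icc (0:ℝ) 1, Complex.exp (L t) = commutatorLoop γ₁ γ₂ t := by
    intro t ht
    simp only [hLdef, commutatorLoop]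
    have e10 : Complex.exp (l₁ 0) = z₀ := by rw [hl₁ 0 h0I, h₁₀]
    have e11 : Complex.exp (l₁ 1) = z₀ := by rw [hl₁ 1 h1I, h₁₁]
    have e20 : Complex.exp (l₂ 0) = z₀ := by rw [hl₂ 0 h0I, h₂₀]
    have e21 : Complex.exp (l₂ 1) = z₀ := by rw [hl₂ 1 h1I, h₂₁]
    split_ifs with h1 h2 h3
    · exact hl₁ _ ⟨by linarith [ht.1, ht.2], by linarith [ht.1, ht.2]⟩
    · rw [Complex.exp_add, Complex.exp_sub, e11, e20, div_self hz₀, mul_one]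
      exact hl₂ _ ⟨by linarith [ht.1, ht.2], by linarith [ht.1, ht.2]⟩
    · rw [Complex.exp_add, Complex.exp_sub, e21, e20, div_self hz₀, mul_one]
      exact hl₁ _ ⟨by linarith [ht.1, ht.2], by linarith [ht.1, ht.2]⟩
    · rw [Complex.exp_add, Complex.exp_sub, e10, e20, div_self hz₀, mul_one]
      exact hl₂ _ ⟨by linarith [ht.1, ht.2], by linarith [ht.1, ht.2]⟩
  have hkC : (k : ℂ) ≠ 0 := Nat.cast_ne_zero.2 (by omega)
  -- the auxiliary root-of-unity-valued function
  set u : ℝ → ℂ := fun t => ζ t * Complex.exp (-(L t) / k) with hudef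
  have huc : ContinuousOn u (Set.Icc 0 1) := hζ.mul ((hLc.neg.div_const _).cexp)
  have huk : ∀ t ∈ Set.Icc (0:ℝ) 1, u t ^ k = 1 := by
    intro t ht
    rw [hudef]
    simp only [mul_pow]
    rw [← Complex.exp_nat_mul, hroot t ht, ← hLexp t ht]
    rw [show (k : ℂ) * (-(L t) / k) = -(L t) by field_simp]
    rw [← Complex.exp_add, add_neg_cancel, Complex.exp_zero]
  -- roots of unity form a finite set
  have hfin : Set.Finite {x : ℂ | x ^ k = 1} := by
    apply Set.Finite.subset (Polynomial.nthRoots k (1:ℂ)).toFinset.finite_toSet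
    intro x hx
    simp only [Multiset.mem_toFinset, Finset.mem_coe]
    rw [Polynomial.mem_nthRoots (by omega : 0 < k)]
    exact hx
  have hpre : IsPreconnected (u '' Set.Icc 0 1) := (isPreconnected_Icc).image u huc
  have hsub : (u '' Set.Icc 0 1).Subsingleton := by
    by_contra h
    have hnt : (u '' Set.Icc 0 1).Nontrivial := Set.not_subsingleton_iff.mp h
    have himg : u '' Set.Icc 0 1 ⊆ {x : ℂ | x ^ k = 1} := by
      rintro x ⟨t, ht, rfl⟩
      exact huk t ht
    exact (hpre.infinite_of_nontrivial hnt) (hfin.subset himg)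
  have h01 : u 1 = u 0 := hsub ⟨1, h1I, rfl⟩ ⟨0, h0I, rfl⟩
  -- L 1 = L 0
  have hL10 : L 1 = L 0 := by
    rw [hLdef]
    norm_num
    try ring
  rw [hudef] at h01
  simp only at h01
  rw [hL10] at h01
  exact mul_right_cancel₀ (Complex.exp_ne_zero _) h01
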